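/- Let k be a difference field and R a strongly σ-étale k-σ-algebra, i.e. R is étale (finite-dimensional with R ⊗_k k̄ isomorphic to a finite product of copies of k̄) as a k-algebra and σ-separable over k. Then σ induces a bijection on the set of primitive idempotents of R, and every idempotent element of R is periodic, i.e. σⁿ(e) = e for some n ≥ 1. -/

import Mathlib

open TensorProduct

/-- The diagonal endomorphism `σ(a ⊗ b) = σ(a) ⊗ σ(b)` of `A ⊗_k B` is injective
(i.e. `A ⊗_k B` is σ-reduced): any ring endomorphism satisfying the defining rule
on pure tensors is injective. -/
def SigmaReducedTensor (k A B : Type) [CommRing k] [CommRing A] [CommRing B]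
    [Algebra k A] [Algebra k B] (σA : A →+* A) (σB : B →+* B) : Prop :=
  ∀ τ : (A ⊗[k] B) →+* A ⊗[k] B,
    (∀ (a : A) (b : B), τ (a ⊗ₜ[k] b) = σA a ⊗ₜ[k] σB b) → Function.Injective τ

/-- A `k`-σ-algebra `R` is σ-separable over `k` if `R ⊗_k K` is σ-reduced for
every difference field extension `K` of `k`. -/
def IsSigmaSeparable (k R : Type) [Field k] [CommRing R] [Algebra k R]
    (σk : k →+* k) (σR : R →+* R) : Prop :=
  ∀ (K : Type) [Field K] [Algebra k K], ∀ σK : K →+* K,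
    (∀ x : k, σK (algebraMap k K x) = algebraMap k K (σk x)) →
    SigmaReducedTensor k K R σK σR

/-- A `k`-algebra is étale if its base change to the algebraic closure of `k`
is a finite product of copies of the algebraic closure. -/
def IsEtaleAlgebra (k R : Type) [Field k] [CommRing R] [Algebra k R] : Prop :=
  ∃ n : ℕ, Nonempty ((AlgebraicClosure k ⊗[k] R) ≃ₐ[AlgebraicClosure k]
    (Fin n → AlgebraicClosure k))

/-- A primitive idempotent: a nonzero idempotent that is not the sum of two
nonzero orthogonal idempotents. -/
def IsPrimitiveIdempotent {R : Type} [CommRing R] (e : R) : Prop :=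
  e ≠ 0 ∧ IsIdempotentElem e ∧
    ∀ a b : R, IsIdempotentElem a → IsIdempotentElem b → a * b = 0 → a + b = e →
      a = 0 ∨ b = 0

/-- In a strongly σ-étale `k`-σ-algebra, σ induces a bijection on the set of
primitive idempotents, and every idempotent is periodic. -/
theorem strongly_etale_stmt7
    (k R : Type) [Field k] [CommRing R] [Algebra k R]
    (σk : k →+* k) (σR : R →+* R)
    (hcomp : ∀ x : k, σR (algebraMap k R x) = algebraMap k R (σk x))
    (hetale : IsEtaleAlgebra k R)
    (hsep : IsSigmaSeparable k R σk σR) :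
    Set.BijOn σR {e : R | IsPrimitiveIdempotent e} {e : R | IsPrimitiveIdempotent e} ∧
      ∀ e : R, IsIdempotentElem e → ∃ n : ℕ, 0 < n ∧ σR^[n] e = e := by
  classical
  set S : Set R := {e : R | IsIdempotentElem e} with hS
  -- Step 1: σR is injective (from σ-separability with K = k).
  have hinj : Function.Injective σR := by
    have hred := hsep k σk (by simp)
    set e := Algebra.TensorProduct.lid k R
    set τ : (k ⊗[k] R) →+* k ⊗[k] R :=
      (e.symm.toAlgHom.toRingHom.comp σR).comp e.toAlgHom.toRingHom with hτ
    have key : ∀ (a : k) (b : R), τ (a ⊗ₜ[k] b) = σk a ⊗ₜ[k] σR b := by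
      intro a b
      have h1 : e (a ⊗ₜ[k] b) = a • b := rfl
      simp only [hτ, RingHom.comp_apply, AlgEquiv.toAlgHom_eq_coe, AlgHom.toRingHom_eq_coe,
        RingHom.coe_coe, AlgHom.coe_coe, h1]
      erw [h1]
      rw [Algebra.smul_def, map_mul, hcomp]
      apply e.injective
      simp [e, Algebra.smul_def]
    have hinjτ := hred τ key
    intro x y hxy
    have : τ (e.symm x) = τ (e.symm y) := by
      simp only [hτ, RingHom.comp_apply, AlgEquiv.toAlgHom_eq_coe, AlgHom.toRingHom_eq_coe,
        RingHom.coe_coe, AlgHom.coe_coe, AlgEquiv.apply_symm_apply]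
      simp [hxy]
    exact e.symm.injective (hinjτ this)
  -- Step 2: the set of idempotents of R is finite.
  have hSfin : S.Finite := by
    obtain ⟨n, ⟨φ⟩⟩ := hetale
    set K := AlgebraicClosure k with hK
    have hincl : Function.Injective (Algebra.TensorProduct.includeRight : R →ₐ[k] K ⊗[k] R) := by
      have halg : Function.Injective (Algebra.linearMap k K) := (algebraMap k K).injective
      have hrt := Module.Flat.rTensor_preserves_injective_linearMap (M := R)
        (Algebra.linearMap k K) halg
      intro a b hab
      have h1 : LinearMap.rTensor R (Algebra.linearMap k K) ((1:k) ⊗ₜ[k] a)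
          = LinearMap.rTensor R (Algebra.linearMap k K) ((1:k) ⊗ₜ[k] b) := by
        simp only [LinearMap.rTensor_tmul, Algebra.linearMap_apply, map_one]
        exact hab
      have h2 := hrt h1
      have := congrArg (TensorProduct.lid k R) h2
      simpa using this
    set F : R → (Fin n → K) := fun r => φ (Algebra.TensorProduct.includeRight r) with hF
    have hFinj : Function.Injective F := fun a b hab => hincl (φ.injective hab)
    have hFmul : ∀ a b : R, F (a * b) = F a * F b := by
      intro a b
      show φ (Algebra.TensorProduct.includeRight (a * b)) = _
      rw [map_mul, map_mul]
    have key : ∀ e : R, IsIdempotentElem e → ∀ i, F e i = 0 ∨ F e i = 1 := by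
      intro e he i
      have h : F e i * F e i = F e i := by
        have : (F e * F e) i = F e i := by rw [← hFmul, he]
        simpa using this
      rcases eq_or_ne (F e i) 0 with h0 | h0
      · exact Or.inl h0
      · exact Or.inr (mul_left_cancel₀ h0 (h.trans (mul_one (F e i)).symm))
    rw [← Set.finite_coe_iff]
    refine Finite.of_injective (fun e => (fun i => F e.1 i = 1 : Fin n → Prop)) ?_
    rintro ⟨a, ha⟩ ⟨b, hb⟩ hab
    simp only [Subtype.mk_eq_mk]
    apply hFinj
    funext i
    have h := congrFun hab i
    rcases key a ha i with h1 | h1 <;> rcases key b hb i with h2 | h2 <;> simp_all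
  -- Step 3: σR restricts to a bijection of S.
  have hmapsS : Set.MapsTo σR S S := by
    intro e he
    show IsIdempotentElem (σR e)
    unfold IsIdempotentElem
    rw [← map_mul, he]
  have hbijS : Set.BijOn σR S S :=
    (hSfin.injOn_iff_bijOn_of_mapsTo hmapsS).mp (hinj.injOn)
  have hsurjS := hbijS.surjOn
  -- maps-to for primitive idempotents
  have hmapsP : Set.MapsTo σR {e : R | IsPrimitiveIdempotent e} {e : R | IsPrimitiveIdempotent e} := by
    rintro e ⟨hne, hid, hprim⟩
    refine ⟨fun h => hne (hinj (h.trans (map_zero σR).symm)), hmapsS hid, ?_⟩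
    intro a b ha hb hab habe
    obtain ⟨a', ha'S, ha'⟩ := hsurjS (show a ∈ S from ha)
    obtain ⟨b', hb'S, hb'⟩ := hsurjS (show b ∈ S from hb)
    have h1 : a' * b' = 0 := by
      apply hinj
      rw [map_mul, ha', hb', hab, map_zero]
    have h2 : a' + b' = e := by
      apply hinj
      rw [map_add, ha', hb', habe]
    rcases hprim a' b' ha'S hb'S h1 h2 with h | h
    · exact Or.inl (by rw [← ha', h, map_zero])
    · exact Or.inr (by rw [← hb', h, map_zero])
  constructor
  · -- bijection on primitive idempotents
    refine ⟨hmapsP, hinj.injOn, ?_⟩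
    rintro f ⟨hfne, hfid, hfprim⟩
    obtain ⟨e, heS, he⟩ := hsurjS (show f ∈ S from hfid)
    refine ⟨e, ⟨?_, heS, ?_⟩, he⟩
    · intro h
      exact hfne (by rw [← he, h, map_zero])
    · intro a b ha hb hab habe
      rcases hfprim (σR a) (σR b) (hmapsS ha) (hmapsS hb)
          (by rw [← map_mul, hab, map_zero]) (by rw [← map_add, habe, he]) with h | h
      · exact Or.inl (hinj (h.trans (map_zero σR).symm))
      · exact Or.inr (hinj (h.trans (map_zero σR).symm))
  · -- periodicity
    intro e he
    have hiter : ∀ m : ℕ, IsIdempotentElem (σR^[m] e) := by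
      intro m
      induction m with
      | zero => exact he
      | succ m ih =>
        rw [Function.iterate_succ_apply']
        exact hmapsS ih
    have : Finite ↥S := hSfin
    have hg : ¬Function.Injective (fun m : ℕ => (⟨σR^[m] e, hiter m⟩ : ↥S)) :=
      not_injective_infinite_finite _
    simp only [Function.Injective, not_forall, Subtype.mk_eq_mk] at hg
    obtain ⟨i, j, hij, hne⟩ := hg
    rcases lt_or_gt_of_ne hne with h | h
    · refine ⟨j - i, by omega, ?_⟩
      have hadd : σR^[i] (σR^[(j - i)] e) = σR^[i] e := by
        rw [← Function.iterate_add_apply]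
        have : i + (j - i) = j := by omega
        rw [this, hij]
      exact hinj.iterate i hadd
    · refine ⟨i - j, by omega, ?_⟩
      have hadd : σR^[j] (σR^[(i - j)] e) = σR^[j] e := by
        rw [← Function.iterate_add_apply]
        have : j + (i - j) = i := by omega
        rw [this, ← hij]
      exact hinj.iterate j hadd
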